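/- In a contiguous path ν from id to w₀ in S_N, for each fixed integer k the steps that move k to the right past elements j with η(j) = η(k) occur in the order of increasing j; consequently the induced mutation sequence seq(ν) restricted to the layer η^{-1}(η(k)) = {j_1 < j_2 < ... < j_l} contains, for each k, a consecutive (within its own contribution) list j_1, j_2, ..., j_{O_+(k)}, where O_+(k) is the number of elements of the layer strictly greater than k. -/

import Mathlib

/-- A contiguous path in `S_N` (0-based): a sequence
`id = ν₁ ↦ ν₂ ↦ ... ↦ ν_{M+1} = w₀` of permutations of `Fin N` in which each
step interchanges two adjacent entries `m < n` (with `m` to the left of `n`) of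
the one-line notation, and the integer `m` may be moved to the right only when
all smaller integers have already been pulled to the right of it. -/
structure ContigPath (N : ℕ) where
  /-- number of steps -/
  M : ℕ
  /-- the permutations along the path -/
  ν : Fin (M + 1) → Equiv.Perm (Fin N)
  /-- the position at which step `i` swaps the entries in slots `pos i`, `pos i + 1` -/
  pos : Fin M → Fin N
  hpos : ∀ i : Fin M, (pos i).val + 1 < N
  start : ν 0 = 1
  finish : ν (Fin.last M) = Fin.revPerm
  step : ∀ i : Fin M,
    ν i.succ = ν i.castSucc * Equiv.swap (pos i) ⟨(pos i).val + 1, hpos i⟩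
  incr : ∀ i : Fin M,
    ν i.castSucc (pos i) < ν i.castSucc ⟨(pos i).val + 1, hpos i⟩
  rule : ∀ i : Fin M, ∀ j : Fin N, j < ν i.castSucc (pos i) →
    pos i < (ν i.castSucc).symm j

/-- The value `τ_•(x)` of the reordering permutation `τ_•` attached to a layer
function `η` and a permutation `τ`: the `r`-th smallest element of the level
set `η⁻¹(η x)`, where `r` is the rank of the position `τ⁻¹(x)` among the
positions `τ⁻¹(y)` of the elements `y` of the level set. -/
def taudot {N : ℕ} (η : Fin N → ℤ) (τ : Equiv.Perm (Fin N)) (x : Fin N) : Fin N :=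
  ((Finset.univ.filter (fun y => η y = η x)).sort (· ≤ ·)).getD
    ((Finset.univ.filter (fun y => η y = η x ∧ τ.symm y < τ.symm x)).card) x

private lemma swap_adj_lt {N : ℕ} {p a b : Fin N} (hp : p.val + 1 < N)
    (hab : a < b) (h : ¬(a = p ∧ b = ⟨p.val + 1, hp⟩)) :
    Equiv.swap p ⟨p.val + 1, hp⟩ a < Equiv.swap p ⟨p.val + 1, hp⟩ b := by
  simp only [Equiv.swap_apply_def]
  rw [not_and_or] at h
  split_ifs with h1 h2 h3 h4 h5 h6 <;>
    simp only [Fin.lt_def, Fin.ext_iff, ← Fin.val_ne_iff] at * <;> omega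

private lemma pn_succ {N : ℕ} (P : ContigPath N) (i : Fin P.M) (x : Fin N) :
    (P.ν i.succ).symm x =
      Equiv.swap (P.pos i) ⟨(P.pos i).val + 1, P.hpos i⟩ ((P.ν i.castSucc).symm x) := by
  rw [P.step i]
  show (P.ν i.castSucc * _)⁻¹ x = _
  rw [mul_inv_rev]
  simp [Equiv.Perm.mul_apply]

private lemma notlt_step {N : ℕ} (P : ContigPath N) (i : Fin P.M) {a b : Fin N} (hab : a < b)
    (h : ¬ (P.ν i.castSucc).symm a < (P.ν i.castSucc).symm b) :
    ¬ (P.ν i.succ).symm a < (P.ν i.succ).symm b := by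
  have hne : (P.ν i.castSucc).symm b ≠ (P.ν i.castSucc).symm a := by
    intro he
    exact absurd (Equiv.injective _ he) (ne_of_gt hab)
  have hba : (P.ν i.castSucc).symm b < (P.ν i.castSucc).symm a :=
    lt_of_le_of_ne (not_lt.mp h) hne
  rw [pn_succ, pn_succ]
  intro hcon
  have hnot : ¬((P.ν i.castSucc).symm b = P.pos i ∧
      (P.ν i.castSucc).symm a = ⟨(P.pos i).val + 1, P.hpos i⟩) := by
    rintro ⟨h1, h2⟩
    have hb' : b = P.ν i.castSucc (P.pos i) := (Equiv.symm_apply_eq _).mp h1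
    have ha' : a = P.ν i.castSucc ⟨(P.pos i).val + 1, P.hpos i⟩ := (Equiv.symm_apply_eq _).mp h2
    have := P.incr i
    rw [← hb', ← ha'] at this
    exact absurd hab (not_lt.mpr (le_of_lt this))
  exact absurd hcon (not_lt.mpr (le_of_lt (swap_adj_lt (P.hpos i) hba hnot)))

private lemma notlt_mono {N : ℕ} (P : ContigPath N) {a b : Fin N} (hab : a < b) :
    ∀ s : ℕ, ∀ hs : s ≤ P.M, ∀ t : Fin (P.M + 1), t.val ≤ s →
    (¬ (P.ν t).symm a < (P.ν t).symm b) →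
    ¬ (P.ν ⟨s, Nat.lt_succ_of_le hs⟩).symm a < (P.ν ⟨s, Nat.lt_succ_of_le hs⟩).symm b := by
  intro s
  induction s with
  | zero =>
    intro hs t ht h
    have : t = ⟨0, Nat.lt_succ_of_le hs⟩ := Fin.ext (Nat.le_zero.mp ht)
    rwa [← this]
  | succ m ih =>
    intro hs t ht h
    rcases Nat.lt_or_ge t.val (m + 1) with h1 | h2
    · have hprev := ih (by omega) t (by omega) h
      have hstep := notlt_step P ⟨m, hs⟩ hab (a := a) (b := b) ?_
      · convert hstep using 2 <;> simp [Fin.succ]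
      · convert hprev using 2 <;> simp [Fin.castSucc, Fin.castAdd, Fin.castLE]
    · have : t = ⟨m + 1, Nat.lt_succ_of_le hs⟩ := Fin.ext (le_antisymm ht h2)
      rwa [← this]

private lemma notlt_mono' {N : ℕ} (P : ContigPath N) {a b : Fin N} (hab : a < b)
    {t t' : Fin (P.M + 1)} (htt : t ≤ t')
    (h : ¬ (P.ν t).symm a < (P.ν t).symm b) :
    ¬ (P.ν t').symm a < (P.ν t').symm b := by
  have := notlt_mono P hab t'.val (by omega) t htt h
  convert this using 2 <;> exact (Fin.eta t' t'.isLt).symm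

private lemma exists_flip {N : ℕ} (P : ContigPath N) {a b : Fin N} (hab : a < b) :
    ∀ s : ℕ, ∀ hs : s ≤ P.M,
    (¬ (P.ν ⟨s, Nat.lt_succ_of_le hs⟩).symm a < (P.ν ⟨s, Nat.lt_succ_of_le hs⟩).symm b) →
    ∃ i : Fin P.M, i.val + 1 ≤ s ∧
      ((P.ν i.castSucc).symm a < (P.ν i.castSucc).symm b) ∧
      ¬ ((P.ν i.succ).symm a < (P.ν i.succ).symm b) := by
  intro s
  induction s with
  | zero =>
    intro hs h
    exfalso
    apply h
    have h0 : (⟨0, Nat.lt_succ_of_le hs⟩ : Fin (P.M + 1)) = 0 := rfl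
    rw [h0, P.start]
    exact hab
  | succ m ih =>
    intro hs h
    by_cases hQ : (P.ν ⟨m, by omega⟩).symm a < (P.ν ⟨m, by omega⟩).symm b
    · refine ⟨⟨m, hs⟩, le_refl _, ?_, ?_⟩
      · convert hQ using 2 <;> simp [Fin.castSucc, Fin.castAdd, Fin.castLE]
      · convert h using 2 <;> simp [Fin.succ]
    · obtain ⟨i, h1, h2, h3⟩ := ih (by omega) hQ
      exact ⟨i, by omega, h2, h3⟩

private lemma flip_char {N : ℕ} (P : ContigPath N) (i : Fin P.M) {a b : Fin N}
    (h1 : (P.ν i.castSucc).symm a < (P.ν i.castSucc).symm b)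
    (h2 : ¬ (P.ν i.succ).symm a < (P.ν i.succ).symm b) :
    (P.ν i.castSucc).symm a = P.pos i ∧
      (P.ν i.castSucc).symm b = ⟨(P.pos i).val + 1, P.hpos i⟩ := by
  by_contra hc
  exact h2 (by rw [pn_succ, pn_succ]; exact swap_adj_lt (P.hpos i) h1 hc)

private lemma step_facts {N : ℕ} (P : ContigPath N) (i : Fin P.M) {k : Fin N}
    (hki : P.ν i.castSucc (P.pos i) = k) :
    k < P.ν i.castSucc ⟨(P.pos i).val + 1, P.hpos i⟩ ∧
    ((P.ν i.castSucc).symm k <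
      (P.ν i.castSucc).symm (P.ν i.castSucc ⟨(P.pos i).val + 1, P.hpos i⟩)) ∧
    ¬ ((P.ν i.succ).symm k <
      (P.ν i.succ).symm (P.ν i.castSucc ⟨(P.pos i).val + 1, P.hpos i⟩)) := by
  have hk : (P.ν i.castSucc).symm k = P.pos i := (Equiv.symm_apply_eq _).mpr hki.symm
  have hpn : (P.ν i.castSucc).symm (P.ν i.castSucc ⟨(P.pos i).val + 1, P.hpos i⟩) =
      ⟨(P.pos i).val + 1, P.hpos i⟩ := Equiv.symm_apply_apply _ _
  refine ⟨?_, ?_, ?_⟩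
  · have := P.incr i; rwa [hki] at this
  · rw [hk, hpn]; exact Fin.lt_def.mpr (by simp)
  · rw [pn_succ, pn_succ, hk, hpn, Equiv.swap_apply_left, Equiv.swap_apply_right]
    exact not_lt.mpr (le_of_lt (Fin.lt_def.mpr (by simp)))

private lemma succ_le_castSucc {M : ℕ} {i i' : Fin M} (h : i < i') :
    (i.succ : Fin (M + 1)) ≤ i'.castSucc := by
  rw [Fin.le_def]
  simp only [Fin.val_succ, Fin.coe_castSucc]
  omega


/-- In a contiguous path, for each fixed value `k`: (1) the steps moving `k`
to the right past a same-layer value occur in increasing order of the passed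
value; (2) if step `i` moves `k` past a same-layer value and `c` of the
earlier steps did so as well, then the recorded mutation index
`(ν_{i+1})_• ν_{i+1}(p_i)` is the `(c+1)`-st smallest element `j_{c+1}` of the
layer `η⁻¹(η k) = {j_1 < j_2 < ...}`; hence the contribution of `k` to the
induced mutation sequence `seq(ν)` within its layer is the list
`j_1, j_2, ..., j_{O_+(k)}`. -/
theorem contigPath_layer_passes (N : ℕ) (η : Fin N → ℤ) (P : ContigPath N)
    (k : Fin N) :
    (∀ i i' : Fin P.M, i < i' →
      P.ν i.castSucc (P.pos i) = k → P.ν i'.castSucc (P.pos i') = k →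
      η (P.ν i.castSucc ⟨(P.pos i).val + 1, P.hpos i⟩) = η k →
      η (P.ν i'.castSucc ⟨(P.pos i').val + 1, P.hpos i'⟩) = η k →
      P.ν i.castSucc ⟨(P.pos i).val + 1, P.hpos i⟩ <
        P.ν i'.castSucc ⟨(P.pos i').val + 1, P.hpos i'⟩) ∧
    (∀ i : Fin P.M, P.ν i.castSucc (P.pos i) = k →
      η (P.ν i.castSucc ⟨(P.pos i).val + 1, P.hpos i⟩) = η k →
      taudot η (P.ν i.succ) (P.ν i.succ (P.pos i)) =
        ((Finset.univ.filter (fun j => η j = η k)).sort (· ≤ ·)).getD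
          ((Finset.univ.filter (fun i' : Fin P.M => i' < i ∧
              P.ν i'.castSucc (P.pos i') = k ∧
              η (P.ν i'.castSucc ⟨(P.pos i').val + 1, P.hpos i'⟩) = η k)).card)
          k) := by
  constructor
  · -- Part (1)
    intro i i' hii hki hki' _ _
    obtain ⟨hkn, hQ, hnQ⟩ := step_facts P i hki
    obtain ⟨hkn', hQ', hnQ'⟩ := step_facts P i' hki'
    set n := P.ν i.castSucc ⟨(P.pos i).val + 1, P.hpos i⟩ with hndef
    set n' := P.ν i'.castSucc ⟨(P.pos i').val + 1, P.hpos i'⟩ with hn'def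
    by_contra hcon
    push_neg at hcon
    rcases eq_or_lt_of_le hcon with heq | hlt
    · -- n' = n
      rw [heq] at hQ'
      exact (notlt_mono' P hkn (succ_le_castSucc hii) hnQ) hQ'
    · -- n' < n
      have hk : (P.ν i.castSucc).symm k = P.pos i := (Equiv.symm_apply_eq _).mpr hki.symm
      have hpn : (P.ν i.castSucc).symm n = ⟨(P.pos i).val + 1, P.hpos i⟩ :=
        Equiv.symm_apply_apply _ _
      -- rel k n' at i.castSucc
      have hQics : (P.ν i.castSucc).symm k < (P.ν i.castSucc).symm n' := by
        by_contra h
        exact (notlt_mono' P hkn' (le_of_lt (Fin.castSucc_lt_castSucc_iff.mpr hii)) h) hQ'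
      -- position of n' at i.castSucc is > pos i and ≠ pos i + 1
      have hne : (P.ν i.castSucc).symm n' ≠ ⟨(P.pos i).val + 1, P.hpos i⟩ := by
        intro he
        have : n' = n := (P.ν i.castSucc).symm.injective (he.trans hpn.symm)
        exact absurd this (ne_of_lt hlt)
      have hgt : ¬ ((P.ν i.castSucc).symm n' < (P.ν i.castSucc).symm n) := by
        rw [hpn]
        intro hcon2
        rw [hk] at hQics
        have h1 : ((P.ν i.castSucc).symm n').val < (P.pos i).val + 1 := hcon2
        have h2 : (P.pos i).val < ((P.ν i.castSucc).symm n').val := hQics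
        have h3 : ((P.ν i.castSucc).symm n').val ≠ (P.pos i).val + 1 :=
          fun hv' => hne (Fin.ext hv')
        omega
      obtain ⟨i₀, hle, hf1, hf2⟩ := exists_flip P hlt i.castSucc.val (by omega)
        (by convert hgt using 2 <;> exact Fin.eta _ _)
      obtain ⟨ha, hb⟩ := flip_char P i₀ hf1 hf2
      have hv : P.ν i₀.castSucc (P.pos i₀) = n' := ((Equiv.symm_apply_eq _).mp ha).symm
      have hrule := P.rule i₀ k (by rw [hv]; exact hkn')
      have hkneq : (P.ν i₀.castSucc).symm k ≠ ⟨(P.pos i₀).val + 1, P.hpos i₀⟩ := by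
        intro he
        have : k = n := (P.ν i₀.castSucc).symm.injective (he.trans hb.symm)
        exact absurd this (ne_of_lt hkn)
      have hnotrel : ¬ ((P.ν i₀.castSucc).symm k < (P.ν i₀.castSucc).symm n) := by
        intro hcon2
        have h1 : (P.pos i₀).val < ((P.ν i₀.castSucc).symm k).val := hrule
        have h2 : ((P.ν i₀.castSucc).symm k).val < ((P.ν i₀.castSucc).symm n).val := hcon2
        have h3 : ((P.ν i₀.castSucc).symm n).val = (P.pos i₀).val + 1 := by rw [hb]
        have h4 : ((P.ν i₀.castSucc).symm k).val ≠ (P.pos i₀).val + 1 :=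
          fun hv' => hkneq (Fin.ext hv')
        omega
      have hfin := notlt_mono' P hkn
        (show i₀.castSucc ≤ i.castSucc by
          rw [Fin.le_def]
          simp only [Fin.coe_castSucc] at hle ⊢
          omega) hnotrel
      exact hfin hQ
  · -- Part (2)
    intro i hki hl
    obtain ⟨hkn, hQ, hnQ⟩ := step_facts P i hki
    have hk : (P.ν i.castSucc).symm k = P.pos i := (Equiv.symm_apply_eq _).mpr hki.symm
    have hn_eq : P.ν i.succ (P.pos i) = P.ν i.castSucc ⟨(P.pos i).val + 1, P.hpos i⟩ := by
      rw [P.step i]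
      simp only [Equiv.Perm.mul_apply, Equiv.swap_apply_left]
    simp only [taudot]
    rw [hn_eq]
    set n := P.ν i.castSucc ⟨(P.pos i).val + 1, P.hpos i⟩ with hndef
    have hηn : η n = η k := hl
    have hpn : (P.ν i.castSucc).symm n = ⟨(P.pos i).val + 1, P.hpos i⟩ :=
      Equiv.symm_apply_apply _ _
    have hsk : (P.ν i.succ).symm k = ⟨(P.pos i).val + 1, P.hpos i⟩ := by
      rw [pn_succ, hk, Equiv.swap_apply_left]
    have hsn : (P.ν i.succ).symm n = P.pos i := by
      rw [pn_succ, hpn, Equiv.swap_apply_right]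
    have hcard : (Finset.univ.filter (fun i' : Fin P.M => i' < i ∧
          P.ν i'.castSucc (P.pos i') = k ∧
          η (P.ν i'.castSucc ⟨(P.pos i').val + 1, P.hpos i'⟩) = η k)).card =
        (Finset.univ.filter (fun y => η y = η k ∧
          (P.ν i.succ).symm y < (P.ν i.succ).symm n)).card := by
      refine Finset.card_bij
        (fun i' _ => P.ν i'.castSucc ⟨(P.pos i').val + 1, P.hpos i'⟩) ?_ ?_ ?_
      · intro i' hi'
        beta_reduce
        rw [Finset.mem_filter] at hi' ⊢
        obtain ⟨-, hlt, hk', hη'⟩ := hi'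
        obtain ⟨hkn', hQ', hnQ'⟩ := step_facts P i' hk'
        refine ⟨Finset.mem_univ _, hη', ?_⟩
        set y := P.ν i'.castSucc ⟨(P.pos i').val + 1, P.hpos i'⟩ with hydef
        have hmono : ¬ (P.ν i.succ).symm k < (P.ν i.succ).symm y := by
          refine notlt_mono' P hkn' ?_ hnQ'
          rw [Fin.le_def]
          simp only [Fin.val_succ]
          have hlt' : i'.val < i.val := hlt
          omega
        have hyn : y ≠ n := by
          intro he
          rw [he] at hnQ'
          exact (notlt_mono' P hkn (succ_le_castSucc hlt) hnQ') hQ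
        have hyk : y ≠ k := ne_of_gt hkn'
        have h2 : ((P.ν i.succ).symm y).val ≤ (P.pos i).val + 1 := by
          have h := not_lt.mp hmono
          rw [hsk] at h
          exact h
        have h3 : ((P.ν i.succ).symm y).val ≠ (P.pos i).val + 1 := by
          intro he
          exact hyk ((P.ν i.succ).symm.injective ((Fin.ext he).trans hsk.symm))
        have h4 : ((P.ν i.succ).symm y).val ≠ (P.pos i).val := by
          intro he
          exact hyn ((P.ν i.succ).symm.injective ((Fin.ext he).trans hsn.symm))
        rw [hsn]
        exact Fin.lt_def.mpr (by omega)
      · intro a ha b hb hab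
        rw [Finset.mem_filter] at ha hb
        obtain ⟨-, hlta, hka, -⟩ := ha
        obtain ⟨-, hltb, hkb, -⟩ := hb
        by_contra hne2
        beta_reduce at hab
        obtain ⟨hkna, hQa, hnQa⟩ := step_facts P a hka
        obtain ⟨hknb, hQb, hnQb⟩ := step_facts P b hkb
        rcases lt_trichotomy a b with h | h | h
        · rw [hab] at hnQa
          exact (notlt_mono' P hknb (succ_le_castSucc h) hnQa) hQb
        · exact hne2 h
        · rw [← hab] at hnQb
          exact (notlt_mono' P hkna (succ_le_castSucc h) hnQb) hQa
      · intro y hy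
        rw [Finset.mem_filter] at hy
        obtain ⟨-, hηy, hylt⟩ := hy
        rw [hsn] at hylt
        have hyval : ((P.ν i.succ).symm y).val < (P.pos i).val := hylt
        have hz : (P.ν i.castSucc).symm y = (P.ν i.succ).symm y := by
          rw [pn_succ]
          rcases eq_or_ne ((P.ν i.castSucc).symm y) (P.pos i) with h | h
          · exfalso
            rw [pn_succ, h, Equiv.swap_apply_left] at hylt
            have : (P.pos i).val + 1 < (P.pos i).val := hylt
            omega
          · rcases eq_or_ne ((P.ν i.castSucc).symm y)
              ⟨(P.pos i).val + 1, P.hpos i⟩ with h2 | h2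
            · exfalso
              rw [pn_succ, h2, Equiv.swap_apply_right] at hylt
              exact lt_irrefl _ hylt
            · rw [Equiv.swap_apply_of_ne_of_ne h h2]
        have hyk : y ≠ k := by
          intro he
          rw [he, hsk] at hylt
          have : (P.pos i).val + 1 < (P.pos i).val := hylt
          omega
        have hky : k < y := by
          rcases lt_or_gt_of_ne (Ne.symm hyk) with h | h
          · exact h
          · exfalso
            have hr := P.rule i y (by rw [hki]; exact h)
            have h1 : (P.pos i).val < ((P.ν i.castSucc).symm y).val := hr
            have h2 : ((P.ν i.castSucc).symm y).val < (P.pos i).val := by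
              rw [hz]; exact hyval
            omega
        have hnrel : ¬ (P.ν i.castSucc).symm k < (P.ν i.castSucc).symm y := by
          intro hcon2
          have h1 : (P.pos i).val < ((P.ν i.castSucc).symm y).val := by
            rw [hk] at hcon2; exact hcon2
          have h2 : ((P.ν i.castSucc).symm y).val < (P.pos i).val := by
            rw [hz]; exact hyval
          omega
        obtain ⟨i₀, hle, hf1, hf2⟩ := exists_flip P hky i.castSucc.val (by omega)
          (by convert hnrel using 2 <;> exact Fin.eta _ _)
        obtain ⟨ha, hb⟩ := flip_char P i₀ hf1 hf2
        have hyb : P.ν i₀.castSucc ⟨(P.pos i₀).val + 1, P.hpos i₀⟩ = y :=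
          ((Equiv.symm_apply_eq _).mp hb).symm
        refine ⟨i₀, ?_, hyb⟩
        rw [Finset.mem_filter]
        refine ⟨Finset.mem_univ _, ?_, ?_, ?_⟩
        · rw [Fin.lt_def]
          simp only [Fin.coe_castSucc] at hle
          omega
        · exact ((Equiv.symm_apply_eq _).mp ha).symm
        · rw [hyb]; exact hηy
    simp only [hηn]
    rw [hcard]
    have hsub : (Finset.univ.filter (fun y => η y = η k ∧
        (P.ν i.succ).symm y < (P.ν i.succ).symm n)) ⊆
        Finset.univ.filter (fun j => η j = η k) := by
      intro y hy
      rw [Finset.mem_filter] at hy ⊢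
      exact ⟨hy.1, hy.2.1⟩
    have hlen : (Finset.univ.filter (fun y => η y = η k ∧
        (P.ν i.succ).symm y < (P.ν i.succ).symm n)).card <
        ((Finset.univ.filter (fun j => η j = η k)).sort (· ≤ ·)).length := by
      rw [Finset.length_sort]
      apply Finset.card_lt_card
      rw [Finset.ssubset_iff_of_subset hsub]
      refine ⟨n, Finset.mem_filter.mpr ⟨Finset.mem_univ _, hηn⟩, ?_⟩
      intro hmem
      exact absurd ((Finset.mem_filter.mp hmem).2.2) (lt_irrefl _)
    rw [List.getD_eq_getElem _ _ hlen, List.getD_eq_getElem _ _ hlen]
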